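/- Under the closed-loop stability setup, for every θ ∈ Θ and every differentiable trajectory x : [0,∞) → ℝⁿ satisfying x′(t) = Σ_{k=1}^K h_k(θ) · (F_k(x(t)) + G_k(x(t)) Z(x(t)) W) · z(x(t)) for all t ≥ 0, the trajectory converges to the origin: x(t) → 0 as t → ∞. -/

import Mathlib

open Matrix Filter Topology

lemma sumMulVec {ι : Type*} {a b : ℕ} (s : Finset ι) (M : ι → Matrix (Fin a) (Fin b) ℝ)
    (v : Fin b → ℝ) : (∑ k ∈ s, M k) *ᵥ v = ∑ k ∈ s, M k *ᵥ v := by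
  induction s using Finset.cons_induction with
  | empty => simp
  | cons i s hi ih => simp [Finset.sum_cons, Matrix.add_mulVec, ih]

lemma mulVecSum {ι : Type*} {a b : ℕ} (s : Finset ι) (M : Matrix (Fin a) (Fin b) ℝ)
    (w : ι → Fin b → ℝ) : M *ᵥ (∑ k ∈ s, w k) = ∑ k ∈ s, M *ᵥ w k := by
  induction s using Finset.cons_induction with
  | empty => simp
  | cons i s hi ih => simp [Finset.sum_cons, Matrix.mulVec_add, ih]

lemma antitoneOn_Ici_of_hasDerivAt {f f' : ℝ → ℝ}
    (hf : ∀ t ∈ Set.Ici (0:ℝ), HasDerivAt f (f' t) t)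
    (hf' : ∀ t ∈ Set.Ici (0:ℝ), f' t ≤ 0) : AntitoneOn f (Set.Ici 0) := by
  apply antitoneOn_of_deriv_nonpos (convex_Ici 0)
  · exact fun t ht => (hf t ht).continuousAt.continuousWithinAt
  · intro t ht
    rw [interior_Ici] at ht
    exact ((hf t (Set.mem_Ici.mpr (le_of_lt ht))).differentiableAt).differentiableWithinAt
  · intro t ht
    rw [interior_Ici] at ht
    rw [(hf t (Set.mem_Ici.mpr ht.le)).deriv]
    exact hf' t (Set.mem_Ici.mpr ht.le)

lemma posdef_quad_lower {d : ℕ} {Q : Matrix (Fin d) (Fin d) ℝ} (hQ : Q.PosDef) :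
    ∃ c > 0, ∀ v : Fin d → ℝ, c * ‖v‖ ^ 2 ≤ v ⬝ᵥ (Q *ᵥ v) := by
  rcases Nat.eq_zero_or_pos d with hd | hd
  · subst hd
    refine ⟨1, one_pos, fun v => ?_⟩
    have : v = 0 := funext fun i => absurd i.2 (by simp)
    rw [this, norm_zero]
    simp
  · haveI : Nonempty (Fin d) := ⟨⟨0, hd⟩⟩
    have hsph : IsCompact (Metric.sphere (0 : Fin d → ℝ) 1) := isCompact_sphere 0 1
    have hne : (Metric.sphere (0 : Fin d → ℝ) 1).Nonempty :=
      NormedSpace.sphere_nonempty.mpr zero_le_one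
    have hcont : Continuous fun v : Fin d → ℝ => v ⬝ᵥ (Q *ᵥ v) :=
      continuous_id.dotProduct (continuous_const.matrix_mulVec continuous_id)
    obtain ⟨v₀, hv₀s, hmin⟩ := hsph.exists_isMinOn hne hcont.continuousOn
    have hv₀norm : ‖v₀‖ = 1 := by simpa using hv₀s
    have hv₀ : v₀ ≠ 0 := by
      intro h0; rw [h0] at hv₀norm; simp at hv₀norm
    have hc : 0 < v₀ ⬝ᵥ (Q *ᵥ v₀) := by simpa using hQ.dotProduct_mulVec_pos hv₀
    refine ⟨_, hc, fun v => ?_⟩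
    by_cases hv : v = 0
    · simp [hv]
    · have hnv : 0 < ‖v‖ := norm_pos_iff.mpr hv
      set u := ‖v‖⁻¹ • v with hu
      have hus : u ∈ Metric.sphere (0 : Fin d → ℝ) 1 := by
        simp [hu, norm_smul, abs_of_pos (inv_pos.mpr hnv), inv_mul_cancel₀ hnv.ne']
      have h1 : v₀ ⬝ᵥ (Q *ᵥ v₀) ≤ u ⬝ᵥ (Q *ᵥ u) := hmin hus
      have hscal : v ⬝ᵥ (Q *ᵥ v) = ‖v‖ ^ 2 * (u ⬝ᵥ (Q *ᵥ u)) := by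
        rw [hu]
        rw [Matrix.mulVec_smul, smul_dotProduct, dotProduct_smul]
        field_simp
        have hn1 : (1 / ‖v‖) * (1 / ‖v‖) * ‖v‖ ^ 2 = 1 := by field_simp [hnv.ne']
        rw [smul_eq_mul, smul_eq_mul]
        linear_combination (-(v ⬝ᵥ (Q *ᵥ v))) * hn1
      rw [hscal]
      have h2 : 0 ≤ ‖v‖ ^ 2 := sq_nonneg _
      calc (v₀ ⬝ᵥ (Q *ᵥ v₀)) * ‖v‖ ^ 2 ≤ (u ⬝ᵥ (Q *ᵥ u)) * ‖v‖ ^ 2 := by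
            exact mul_le_mul_of_nonneg_right h1 h2
        _ = ‖v‖ ^ 2 * (u ⬝ᵥ (Q *ᵥ u)) := by ring

lemma dotProductSum {ι : Type*} {a : ℕ} (s : Finset ι) (v : Fin a → ℝ) (w : ι → Fin a → ℝ) :
    v ⬝ᵥ (∑ k ∈ s, w k) = ∑ k ∈ s, v ⬝ᵥ w k := by
  induction s using Finset.cons_induction with
  | empty => simp
  | cons i s hi ih => simp [Finset.sum_cons, dotProduct_add, ih]

noncomputable section

/-- `U_k(x) = −((P+Pᵀ)/2) · Dz(x) · (F_k(x) + G_k(x) Z(x) W)`. -/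
def Umat {n m d dZ : ℕ} (Dz : (Fin n → ℝ) → Matrix (Fin d) (Fin n) ℝ)
    (F : (Fin n → ℝ) → Matrix (Fin n) (Fin d) ℝ)
    (G : (Fin n → ℝ) → Matrix (Fin n) (Fin m) ℝ)
    (Z : (Fin n → ℝ) → Matrix (Fin m) (Fin dZ) ℝ)
    (x : Fin n → ℝ) (P : Matrix (Fin d) (Fin d) ℝ) (W : Matrix (Fin dZ) (Fin d) ℝ) :
    Matrix (Fin d) (Fin d) ℝ :=
  -(((1 : ℝ) / 2) • (P + Pᵀ)) * (Dz x * (F x + G x * Z x * W))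

/-- Under the closed-loop stability setup, every trajectory of the
polytopic closed-loop system converges to the origin, for every value of the uncertain
parameter `θ`. -/
theorem robust_global_asymptotic_stability
    {n m d dξ dZ K : ℕ}
    (hn : 0 < n) (hm : 0 < m) (hd : 0 < d) (hdξ : 0 < dξ) (hdZ : 0 < dZ) (hK : 0 < K)
    (z : (Fin n → ℝ) → Fin d → ℝ)
    (Dz : (Fin n → ℝ) → Matrix (Fin d) (Fin n) ℝ)
    (hzdiff : ∀ x, HasFDerivAt z (LinearMap.toContinuousLinearMap (Dz x).mulVecLin) x)
    (hDzcont : Continuous Dz)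
    (hz0 : ∀ x, z x = 0 ↔ x = 0)
    (hzinf : Tendsto (fun x => ‖z x‖) (cocompact (Fin n → ℝ)) atTop)
    (ξ : (Fin n → ℝ) → Fin dξ → ℝ)
    (hξcont : Continuous ξ)
    (hξ0 : ∀ x, ξ x = 0 ↔ x = 0)
    (hξinf : Tendsto (fun x => ‖ξ x‖) (cocompact (Fin n → ℝ)) atTop)
    (F : Fin K → (Fin n → ℝ) → Matrix (Fin n) (Fin d) ℝ)
    (G : Fin K → (Fin n → ℝ) → Matrix (Fin n) (Fin m) ℝ)
    (Z : (Fin n → ℝ) → Matrix (Fin m) (Fin dZ) ℝ)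
    (hFcont : ∀ k, Continuous (F k)) (hGcont : ∀ k, Continuous (G k))
    (hZcont : Continuous Z)
    (Θ : Type*) (h : Fin K → Θ → ℝ)
    (hh01 : ∀ k θ, h k θ ∈ Set.Icc (0 : ℝ) 1)
    (hsum : ∀ θ : Θ, ∑ k, h k θ = 1)
    (W : Matrix (Fin dZ) (Fin d) ℝ)
    (P : Matrix (Fin d) (Fin d) ℝ)
    (hP : (P + Pᵀ).PosDef)
    (T : Fin K → Matrix (Fin dξ) (Fin dξ) ℝ)
    (hT : ∀ k, (T k).PosDef)
    (hUT : ∀ (x : Fin n → ℝ) (k : Fin K),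
      z x ⬝ᵥ (Umat Dz (F k) (G k) Z x P W *ᵥ z x) = ξ x ⬝ᵥ (T k *ᵥ ξ x)) :
    ∀ (θ : Θ) (x : ℝ → Fin n → ℝ),
      (∀ t : ℝ, 0 ≤ t → HasDerivAt x
        ((∑ k, h k θ • (F k (x t) + G k (x t) * Z (x t) * W)) *ᵥ z (x t)) t) →
      Tendsto x atTop (𝓝 0) := by
  intro θ x hx
  set Q : Matrix (Fin d) (Fin d) ℝ := P + Pᵀ with hQdef
  have hQsymm : Qᵀ = Q := by
    rw [hQdef, Matrix.transpose_add, Matrix.transpose_transpose, add_comm]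
  have hzc : Continuous z := continuous_iff_continuousAt.mpr fun y => (hzdiff y).continuousAt
  set V : (Fin n → ℝ) → ℝ := fun y => z y ⬝ᵥ (Q *ᵥ z y) with hVdef
  have hVc : Continuous V := hzc.dotProduct (continuous_const.matrix_mulVec hzc)
  have hV0 : ∀ y, 0 ≤ V y := fun y => by simpa using hP.posSemidef.dotProduct_mulVec_nonneg (z y)
  have hVpos : ∀ y, y ≠ 0 → 0 < V y := fun y hy => by
    simpa using hP.dotProduct_mulVec_pos (x := z y) (fun hzy => hy ((hz0 y).mp hzy))
  set D : (Fin n → ℝ) → ℝ := fun y => ∑ k, h k θ * (ξ y ⬝ᵥ (T k *ᵥ ξ y)) with hDdef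
  have hDc : Continuous D := continuous_finset_sum _ fun k _ =>
    continuous_const.mul (hξcont.dotProduct (continuous_const.matrix_mulVec hξcont))
  have hD0 : ∀ y, 0 ≤ D y := fun y => Finset.sum_nonneg fun k _ =>
    mul_nonneg (hh01 k θ).1 (by simpa using (hT k).posSemidef.dotProduct_mulVec_nonneg (ξ y))
  have hDpos : ∀ y, y ≠ 0 → 0 < D y := by
    intro y hy
    have hξy : ξ y ≠ 0 := fun hh => hy ((hξ0 y).mp hh)
    obtain ⟨k, _, hk⟩ : ∃ k ∈ Finset.univ, 0 < h k θ := by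
      by_contra hcon
      push_neg at hcon
      have : ∑ k, h k θ = 0 := Finset.sum_eq_zero fun k hk =>
        le_antisymm (hcon k hk) (hh01 k θ).1
      rw [hsum θ] at this; norm_num at this
    refine Finset.sum_pos' (fun k _ => mul_nonneg (hh01 k θ).1
      (by simpa using (hT k).posSemidef.dotProduct_mulVec_nonneg (ξ y))) ⟨k, Finset.mem_univ k, ?_⟩
    exact mul_pos hk (by simpa using (hT k).dotProduct_mulVec_pos hξy)
  set v : ℝ → ℝ := fun t => V (x t) with hvdef
  -- derivative of the Lyapunov function along the trajectory
  have hv' : ∀ t, 0 ≤ t → HasDerivAt v (-4 * D (x t)) t := by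
    intro t ht
    set p := x t with hp
    set A : Matrix (Fin n) (Fin d) ℝ := ∑ k, h k θ • (F k p + G k p * Z p * W) with hA
    have hxd : HasDerivAt x (A *ᵥ z p) t := hx t ht
    have hy : HasDerivAt (fun s => z (x s)) (Dz p *ᵥ (A *ᵥ z p)) t := by
      have := (hzdiff p).comp_hasDerivAt t hxd
      simpa [Function.comp_def] using this
    set y' : Fin d → ℝ := Dz p *ᵥ (A *ᵥ z p) with hy'
    have hyi : ∀ i, HasDerivAt (fun s => z (x s) i) (y' i) t := fun i => hasDerivAt_pi.mp hy i
    have hder : HasDerivAt (fun s => ∑ i, ∑ j, z (x s) i * (Q i j * z (x s) j))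
        (∑ i, ∑ j, (y' i * (Q i j * z p j) + z p i * (Q i j * y' j))) t := by
      refine HasDerivAt.fun_sum fun i _ => HasDerivAt.fun_sum fun j _ => ?_
      exact (hyi i).mul ((hyi j).const_mul (Q i j))
    have hfun : (fun s => ∑ i, ∑ j, z (x s) i * (Q i j * z (x s) j)) = v := by
      funext s
      simp [hvdef, hVdef, dotProduct, Matrix.mulVec, Finset.mul_sum]
    rw [hfun] at hder
    convert hder using 1
    have hsym : ∀ a b : Fin d → ℝ, a ⬝ᵥ (Q *ᵥ b) = b ⬝ᵥ (Q *ᵥ a) := by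
      intro a b
      calc a ⬝ᵥ (Q *ᵥ b) = (a ᵥ* Q) ⬝ᵥ b := dotProduct_mulVec a Q b
        _ = (Qᵀ *ᵥ a) ⬝ᵥ b := by rw [Matrix.mulVec_transpose]
        _ = b ⬝ᵥ (Qᵀ *ᵥ a) := dotProduct_comm _ _
        _ = b ⬝ᵥ (Q *ᵥ a) := by rw [hQsymm]
    have hsplit : (∑ i, ∑ j, (y' i * (Q i j * z p j) + z p i * (Q i j * y' j)))
        = y' ⬝ᵥ (Q *ᵥ z p) + z p ⬝ᵥ (Q *ᵥ y') := by
      simp [dotProduct, Matrix.mulVec, Finset.mul_sum, Finset.sum_add_distrib]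
    have hk : ∀ k : Fin K,
        z p ⬝ᵥ ((Q * Dz p * (F k p + G k p * Z p * W)) *ᵥ z p)
          = -2 * (ξ p ⬝ᵥ (T k *ᵥ ξ p)) := by
      intro k
      have hU := hUT p k
      have hUeq : Umat Dz (F k) (G k) Z p P W
          = (-(1/2 : ℝ)) • (Q * Dz p * (F k p + G k p * Z p * W)) := by
        rw [Umat, ← hQdef, Matrix.neg_mul, Matrix.smul_mul, neg_smul, Matrix.mul_assoc]
        rw [← Matrix.mul_assoc]
      rw [hUeq, Matrix.smul_mulVec, dotProduct_smul, smul_eq_mul] at hU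
      linarith
    have hval : z p ⬝ᵥ (Q *ᵥ y') = -2 * D p := by
      have e1 : Q *ᵥ y' = ∑ k, h k θ • ((Q * Dz p * (F k p + G k p * Z p * W)) *ᵥ z p) := by
        rw [hy', Matrix.mulVec_mulVec, hA, sumMulVec, mulVecSum]
        refine Finset.sum_congr rfl fun k _ => ?_
        rw [Matrix.smul_mulVec, Matrix.mulVec_smul, Matrix.mulVec_mulVec,
          Matrix.mul_assoc]
      rw [e1, dotProductSum]
      have e2 : ∀ k : Fin K, z p ⬝ᵥ (h k θ • ((Q * Dz p * (F k p + G k p * Z p * W)) *ᵥ z p))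
          = h k θ * (-2 * (ξ p ⬝ᵥ (T k *ᵥ ξ p))) := by
        intro k
        rw [dotProduct_smul, smul_eq_mul, hk k]
      rw [Finset.sum_congr rfl fun k _ => e2 k]
      rw [hDdef]
      rw [Finset.mul_sum]
      refine Finset.sum_congr rfl fun k _ => ?_
      ring
    rw [hsplit, hsym y' (z p), hval]
    ring
  have hanti : AntitoneOn v (Set.Ici 0) :=
    antitoneOn_Ici_of_hasDerivAt (f' := fun t => -4 * D (x t))
      (fun t ht => hv' t ht)
      (fun t _ => by
        show -4 * D (x t) ≤ 0
        nlinarith [hD0 (x t)])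
  -- compact sublevel set
  obtain ⟨c, hc, hcq⟩ := posdef_quad_lower hP
  set V0 := v 0 with hV0def
  set K₀ : Set (Fin n → ℝ) := {y | V y ≤ V0} with hK₀def
  have hK₀closed : IsClosed K₀ := isClosed_le hVc continuous_const
  have hK₀cpt : IsCompact K₀ := by
    set R := Real.sqrt (V0 / c) with hR
    have hev : ∀ᶠ y in cocompact (Fin n → ℝ), R + 1 ≤ ‖z y‖ :=
      hzinf.eventually_ge_atTop (R + 1)
    obtain ⟨Kc, hKc, hKcsub⟩ := Filter.mem_cocompact.mp hev
    refine hKc.of_isClosed_subset hK₀closed ?_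
    intro y hy
    by_contra hyK
    have h1 : R + 1 ≤ ‖z y‖ := hKcsub hyK
    have h2 : c * ‖z y‖ ^ 2 ≤ V0 := le_trans (hcq (z y)) hy
    have h3 : ‖z y‖ ^ 2 ≤ V0 / c := by
      rw [le_div_iff₀ hc]; linarith [h2]
    have h4 : ‖z y‖ ≤ R := by
      rw [hR]
      exact (Real.le_sqrt (norm_nonneg _) (div_nonneg (hV0 (x 0)) hc.le)).mpr h3
    linarith
  have htraj : ∀ t, 0 ≤ t → x t ∈ K₀ := fun t ht =>
    hanti (Set.self_mem_Ici) ht ht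
  -- V (x t) gets below any positive level
  have key : ∀ ε > 0, ∃ t₀, 0 ≤ t₀ ∧ v t₀ < ε := by
    intro ε hε
    by_contra hcon
    push_neg at hcon
    set C : Set (Fin n → ℝ) := K₀ ∩ {y | ε ≤ V y} with hCdef
    have hCcpt : IsCompact C := hK₀cpt.inter_right (isClosed_le continuous_const hVc)
    have hCne : C.Nonempty := ⟨x 0, htraj 0 le_rfl, hcon 0 le_rfl⟩
    obtain ⟨y₀, hy₀C, hmin⟩ := hCcpt.exists_isMinOn hCne hDc.continuousOn
    have hy₀ : y₀ ≠ 0 := by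
      intro h0
      have : V y₀ = 0 := by
        simp [hVdef, (hz0 y₀).mpr h0]
      have := hy₀C.2
      rw [Set.mem_setOf_eq] at this
      linarith
    have hδ : 0 < D y₀ := hDpos y₀ hy₀
    have hxtC : ∀ t, 0 ≤ t → x t ∈ C := fun t ht => ⟨htraj t ht, hcon t ht⟩
    set w : ℝ → ℝ := fun t => v t + (4 * D y₀) * t with hwdef
    have hwanti : AntitoneOn w (Set.Ici 0) := by
      apply antitoneOn_Ici_of_hasDerivAt
        (f' := fun t => -4 * D (x t) + 4 * D y₀)
      · intro t ht
        have := (hv' t ht).add ((hasDerivAt_id t).const_mul (4 * D y₀))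
        simpa [hwdef, mul_comm, Pi.add_def] using this
      · intro t ht
        have := hmin (hxtC t ht)
        simp only [Set.mem_setOf_eq] at this
        show -4 * D (x t) + 4 * D y₀ ≤ 0
        nlinarith [this]
    set t₁ : ℝ := V0 / (4 * D y₀) + 1 with ht₁
    have ht₁pos : (0:ℝ) ≤ t₁ := by
      have h0 : 0 ≤ V0 / (4 * D y₀) := div_nonneg (hV0 (x 0)) (by linarith)
      rw [ht₁]
      linarith
    have hw1 : w t₁ ≤ w 0 := hwanti Set.self_mem_Ici ht₁pos ht₁pos
    have hvt₁ : v t₁ ≤ V0 - 4 * D y₀ * t₁ := by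
      simp only [hwdef] at hw1
      simp only [mul_zero, add_zero] at hw1
      linarith
    have h5 : 4 * D y₀ * t₁ > V0 := by
      rw [ht₁]
      have h4δ : 0 < 4 * D y₀ := by linarith
      rw [mul_add, mul_one, mul_div_cancel₀ _ h4δ.ne']
      linarith
    have := hV0 (x t₁)
    have hvv : v t₁ = V (x t₁) := rfl
    linarith
  -- conclude convergence
  rw [NormedAddCommGroup.tendsto_nhds_zero]
  intro ε hε
  set S : Set (Fin n → ℝ) := K₀ ∩ {y | ε ≤ ‖y‖} with hSdef
  have hScpt : IsCompact S := hK₀cpt.inter_right (isClosed_le continuous_const continuous_norm)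
  by_cases hSne : S.Nonempty
  · obtain ⟨y₁, hy₁S, hminV⟩ := hScpt.exists_isMinOn hSne hVc.continuousOn
    have hy₁ne : y₁ ≠ 0 := by
      intro h0
      have := hy₁S.2
      rw [Set.mem_setOf_eq, h0, norm_zero] at this
      linarith
    have hρ : 0 < V y₁ := hVpos y₁ hy₁ne
    obtain ⟨t₀, ht₀, hvt₀⟩ := key (V y₁) hρ
    filter_upwards [eventually_ge_atTop t₀] with t ht'
    have htt : 0 ≤ t := le_trans ht₀ ht'
    have hmono : v t ≤ v t₀ := hanti ht₀ htt ht'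
    have hlt : V (x t) < V y₁ := lt_of_le_of_lt hmono hvt₀
    by_contra hge
    push_neg at hge
    have hxS : x t ∈ S := ⟨htraj t htt, hge⟩
    have := hminV hxS
    simp only [Set.mem_setOf_eq] at this
    exact absurd this (not_le.mpr hlt)
  · filter_upwards [eventually_ge_atTop (0:ℝ)] with t ht
    by_contra hge
    push_neg at hge
    exact hSne ⟨x t, ⟨htraj t ht, hge⟩⟩
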